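/- arXiv:0802.4417 — 2 statements merged into one kernel-verified Lean document; each statement's English description precedes it below -/
import Mathlib

section
/- Let Δ be a nonempty open subset of the open unit disk 𝔻 and let f : Δ → ℂ be a function such that the kernel K(λ, μ) = (1 − f(λ)·conj(f(μ)))/(1 − λ·conj(μ)) is positive on Δ. Then there exists a unique Schur function 𝒮 : 𝔻 → ℂ (analytic on 𝔻 with |𝒮(z)| ≤ 1 for all z ∈ 𝔻) such that 𝒮(λ) = f(λ) for all λ ∈ Δ. -/
open Complex Metric

/-- The open unit disk in `ℂ`. -/
def unitDisk : Set ℂ := Metric.ball (0 : ℂ) 1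

/-- A kernel `K` is positive on a set `A ⊆ ℂ` if for every finite choice of points in `A`
and complex coefficients, the associated quadratic form is a nonnegative real number. -/
def IsPosKernel (A : Set ℂ) (K : ℂ → ℂ → ℂ) : Prop :=
  ∀ (n : ℕ) (z : Fin n → ℂ), (∀ i, z i ∈ A) → ∀ c : Fin n → ℂ,
    0 ≤ (∑ i, ∑ j, c i * (starRingEnd ℂ) (c j) * K (z i) (z j)).re ∧
    (∑ i, ∑ j, c i * (starRingEnd ℂ) (c j) * K (z i) (z j)).im = 0

/-- A Schur function: analytic on the open unit disk and bounded by one there. -/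
def IsSchur (S : ℂ → ℂ) : Prop :=
  DifferentiableOn ℂ S unitDisk ∧ ∀ z ∈ unitDisk, ‖S z‖ ≤ 1

open scoped ComplexInnerProductSpace ENNReal Topology

noncomputable section SchurAux

namespace SchurAux

abbrev Hsp : Type := lp (fun _ : ℕ => ℂ) 2

lemma memℓp_ksec {z : ℂ} (hz : ‖z‖ < 1) :
    Memℓp (fun n : ℕ => ((starRingEnd ℂ) z) ^ n) 2 := by
  apply memℓp_gen
  have h2 : ((2 : ℝ≥0∞)).toReal = ((2 : ℕ) : ℝ) := by norm_num
  have hsq : ‖z‖ ^ 2 < 1 := pow_lt_one₀ (norm_nonneg z) hz two_ne_zero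
  have hgeo : Summable fun n : ℕ => (‖z‖ ^ 2) ^ n :=
    summable_geometric_of_lt_one (by positivity) hsq
  refine hgeo.congr fun n => ?_
  rw [h2, Real.rpow_natCast, norm_pow, RCLike.norm_conj]
  ring

/-- The Szegő kernel vector at `z` (junk value outside the disk). -/
def kvec (z : ℂ) : Hsp :=
  if hz : ‖z‖ < 1 then ⟨fun n => ((starRingEnd ℂ) z) ^ n, memℓp_ksec hz⟩ else 0

lemma kvec_apply {z : ℂ} (hz : ‖z‖ < 1) (n : ℕ) :
    (kvec z) n = ((starRingEnd ℂ) z) ^ n := by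
  simp only [kvec, dif_pos hz]

lemma kvec_ne_zero {z : ℂ} (hz : ‖z‖ < 1) : kvec z ≠ 0 := by
  intro h
  have h0 := congrArg (fun v : Hsp => v 0) h
  simp only [kvec_apply hz 0, pow_zero] at h0
  rw [lp.coeFn_zero] at h0
  simp at h0

/-- Power sums with given coefficient sequence. -/
def psum (a : ℕ → ℂ) (w : ℂ) : ℂ := ∑' n, a n * w ^ n

lemma psum_summable {a : ℕ → ℂ} {C : ℝ} (ha : ∀ n, ‖a n‖ ≤ C) {w : ℂ} (hw : ‖w‖ < 1) :
    Summable fun n => a n * w ^ n := by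
  refine Summable.of_norm ?_
  have hgeo : Summable fun n : ℕ => C * ‖w‖ ^ n :=
    (summable_geometric_of_lt_one (norm_nonneg w) hw).mul_left C
  refine Summable.of_nonneg_of_le (fun n => norm_nonneg _) (fun n => ?_) hgeo
  rw [norm_mul, norm_pow]
  exact mul_le_mul_of_nonneg_right (ha n) (by positivity)

lemma psum_differentiableOn {a : ℕ → ℂ} {C : ℝ} (ha : ∀ n, ‖a n‖ ≤ C) :
    DifferentiableOn ℂ (psum a) (ball (0 : ℂ) 1) := by
  intro z hz
  rw [mem_ball_zero_iff] at hz
  set r : ℝ := (‖z‖ + 1) / 2 with hr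
  have hzr : ‖z‖ < r := by rw [hr]; linarith
  have hr0 : 0 ≤ r := by positivity
  have hr1 : r < 1 := by rw [hr]; linarith
  have hC0 : 0 ≤ C := le_trans (norm_nonneg (a 0)) (ha 0)
  have hdiff : DifferentiableOn ℂ (psum a) (ball (0 : ℂ) r) := by
    refine differentiableOn_tsum_of_summable_norm
      ((summable_geometric_of_lt_one hr0 hr1).mul_left C)
      (fun n => ((differentiable_pow n).const_mul (a n)).differentiableOn)
      isOpen_ball (fun n w hw => ?_)
    rw [mem_ball_zero_iff] at hw
    rw [norm_mul, norm_pow]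
    exact mul_le_mul (ha n) (pow_le_pow_left₀ (norm_nonneg w) hw.le n) (by positivity) hC0
  exact ((hdiff.differentiableAt (isOpen_ball.mem_nhds (mem_ball_zero_iff.2 hzr)))).differentiableWithinAt

lemma psum_coeffs_eq_zero {C : ℝ} :
    ∀ (a : ℕ → ℂ), (∀ n, ‖a n‖ ≤ C) → (∀ w ∈ ball (0 : ℂ) 1, psum a w = 0) → ∀ n, a n = 0 := by
  have hzero : ∀ (a : ℕ → ℂ), (∀ w ∈ ball (0 : ℂ) 1, psum a w = 0) → a 0 = 0 := by
    intro a h0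
    have hm : (0 : ℂ) ∈ ball (0 : ℂ) 1 := mem_ball_self one_pos
    have h := h0 0 hm
    rw [psum, tsum_eq_single 0 (fun n hn => by simp [zero_pow hn])] at h
    simpa using h
  have hshift : ∀ (a : ℕ → ℂ), (∀ n, ‖a n‖ ≤ C) → (∀ w ∈ ball (0 : ℂ) 1, psum a w = 0) →
      ∀ w ∈ ball (0 : ℂ) 1, psum (fun n => a (n + 1)) w = 0 := by
    intro a ha h0
    have ha' : ∀ n, ‖a (n + 1)‖ ≤ C := fun n => ha _
    have hpunct : ∀ w ∈ ball (0 : ℂ) 1, w ≠ 0 → psum (fun n => a (n + 1)) w = 0 := by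
      intro w hw hw0
      have hwn : ‖w‖ < 1 := mem_ball_zero_iff.1 hw
      have hsum := psum_summable ha hwn
      have hexp : psum a w = a 0 + w * psum (fun n => a (n + 1)) w := by
        rw [psum, Summable.tsum_eq_zero_add hsum]
        simp only [pow_zero, mul_one]
        congr 1
        rw [psum, ← tsum_mul_left]
        exact tsum_congr fun n => by ring
      have h0w := h0 w hw
      rw [hexp, hzero a h0, zero_add] at h0w
      exact (mul_eq_zero.1 h0w).resolve_left hw0
    intro w hw
    by_cases hw0 : w = 0
    · subst hw0
      haveI : (𝓝[≠] (0 : ℂ)).NeBot := Module.punctured_nhds_neBot ℂ ℂ 0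
      have hm : (0 : ℂ) ∈ ball (0 : ℂ) 1 := mem_ball_self one_pos
      have hcont : ContinuousAt (psum fun n => a (n + 1)) 0 :=
        ((psum_differentiableOn ha').continuousOn).continuousAt (isOpen_ball.mem_nhds hm)
      have hmemb : ball (0 : ℂ) 1 ∈ 𝓝[≠] (0 : ℂ) :=
        nhdsWithin_le_nhds (isOpen_ball.mem_nhds hm)
      have hev : ∀ᶠ x in 𝓝[≠] (0 : ℂ), psum (fun n => a (n + 1)) x = 0 := by
        filter_upwards [self_mem_nhdsWithin, hmemb] with x hx1 hx2
        exact hpunct x hx2 hx1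
      have t1 : Filter.Tendsto (psum fun n => a (n + 1)) (𝓝[≠] (0 : ℂ))
          (𝓝 (psum (fun n => a (n + 1)) 0)) :=
        hcont.tendsto.mono_left nhdsWithin_le_nhds
      have t2 : Filter.Tendsto (psum fun n => a (n + 1)) (𝓝[≠] (0 : ℂ)) (𝓝 0) :=
        Filter.Tendsto.congr' (Filter.EventuallyEq.symm hev) tendsto_const_nhds
      exact tendsto_nhds_unique t1 t2
    · exact hpunct w hw hw0
  intro a ha h0 n
  induction n generalizing a with
  | zero => exact hzero a h0
  | succ n ih => exact ih (fun m => a (m + 1)) (fun m => ha _) (hshift a ha h0)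

lemma inner_kvec_left (y : Hsp) {z : ℂ} (hz : ‖z‖ < 1) :
    ⟪kvec z, y⟫ = psum (fun n => y n) z := by
  rw [lp.inner_eq_tsum, psum]
  refine tsum_congr fun n => ?_
  rw [RCLike.inner_apply, kvec_apply hz, map_pow, Complex.conj_conj]

lemma inner_kvec_right (y : Hsp) {z : ℂ} (hz : ‖z‖ < 1) :
    ⟪y, kvec z⟫ = psum (fun n => (starRingEnd ℂ) (y n)) ((starRingEnd ℂ) z) := by
  rw [lp.inner_eq_tsum, psum]
  refine tsum_congr fun n => ?_
  rw [RCLike.inner_apply, kvec_apply hz]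
  ring

lemma inner_kvec {z w : ℂ} (hz : ‖z‖ < 1) (hw : ‖w‖ < 1) :
    ⟪kvec z, kvec w⟫ = (1 - z * (starRingEnd ℂ) w)⁻¹ := by
  have hzw : ‖z * (starRingEnd ℂ) w‖ < 1 := by
    rw [norm_mul, RCLike.norm_conj]
    nlinarith [norm_nonneg z, norm_nonneg w]
  rw [lp.inner_eq_tsum]
  calc (∑' n, ⟪(kvec z) n, (kvec w) n⟫)
      = ∑' n, (z * (starRingEnd ℂ) w) ^ n := by
        refine tsum_congr fun n => ?_
        rw [RCLike.inner_apply, kvec_apply hz, kvec_apply hw, map_pow, Complex.conj_conj,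
          mul_pow]
        exact mul_comm _ _
    _ = (1 - z * (starRingEnd ℂ) w)⁻¹ := tsum_geometric_of_norm_lt_one hzw

lemma eqOn_zero_disk {F : ℂ → ℂ} (hF : DifferentiableOn ℂ F (ball (0 : ℂ) 1))
    {V : Set ℂ} (hV : IsOpen V) (hVne : V.Nonempty) (hVsub : V ⊆ ball (0 : ℂ) 1)
    (h0 : ∀ w ∈ V, F w = 0) : ∀ w ∈ ball (0 : ℂ) 1, F w = 0 := by
  obtain ⟨w₀, hw₀⟩ := hVne
  have han : AnalyticOnNhd ℂ F (ball (0 : ℂ) 1) := hF.analyticOnNhd isOpen_ball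
  have hev : F =ᶠ[nhds w₀] 0 := by
    filter_upwards [hV.mem_nhds hw₀] with w hw using h0 w hw
  exact fun w hw => han.eqOn_zero_of_preconnected_of_eventuallyEq_zero
    (convex_ball (0 : ℂ) 1).isPreconnected (hVsub hw₀) hev hw

/-! ### The multiplication operator construction -/

def Pmap : (ℂ →₀ ℂ) →ₗ[ℂ] Hsp := Finsupp.linearCombination ℂ kvec

def Qmap (f : ℂ → ℂ) : (ℂ →₀ ℂ) →ₗ[ℂ] Hsp :=
  Finsupp.linearCombination ℂ (fun a => (starRingEnd ℂ) (f a) • kvec a)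

def Psup (Δ : Set ℂ) : (Finsupp.supported ℂ ℂ Δ) →ₗ[ℂ] Hsp :=
  Pmap.comp (Submodule.subtype _)

def Qsup (Δ : Set ℂ) (f : ℂ → ℂ) : (Finsupp.supported ℂ ℂ Δ) →ₗ[ℂ] Hsp :=
  (Qmap f).comp (Submodule.subtype _)

def Msub (Δ : Set ℂ) : Submodule ℂ Hsp := LinearMap.range (Psup Δ)

lemma contractFin (Δ : Set ℂ) (f : ℂ → ℂ) (hΔsub : Δ ⊆ ball (0 : ℂ) 1)
    (hpos : IsPosKernel Δ
      (fun lam mu => (1 - f lam * (starRingEnd ℂ) (f mu)) / (1 - lam * (starRingEnd ℂ) mu)))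
    (n : ℕ) (z : Fin n → ℂ) (hz : ∀ i, z i ∈ Δ) (c : Fin n → ℂ) :
    ‖∑ i, ((starRingEnd ℂ) (c i) * (starRingEnd ℂ) (f (z i))) • kvec (z i)‖ ≤
      ‖∑ i, (starRingEnd ℂ) (c i) • kvec (z i)‖ := by
  set A := ∑ i, (starRingEnd ℂ) (c i) • kvec (z i) with hAdef
  set B := ∑ i, ((starRingEnd ℂ) (c i) * (starRingEnd ℂ) (f (z i))) • kvec (z i) with hBdef
  have hzn : ∀ i, ‖z i‖ < 1 := fun i => mem_ball_zero_iff.1 (hΔsub (hz i))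
  have hden : ∀ i j, (1 : ℂ) - z i * (starRingEnd ℂ) (z j) ≠ 0 := by
    intro i j
    have hlt : ‖z i * (starRingEnd ℂ) (z j)‖ < 1 := by
      rw [norm_mul, RCLike.norm_conj]
      nlinarith [norm_nonneg (z i), norm_nonneg (z j), hzn i, hzn j]
    intro h
    rw [sub_eq_zero] at h
    rw [← h] at hlt
    simp at hlt
  have hA : ⟪A, A⟫ = ∑ i, ∑ j,
      c i * (starRingEnd ℂ) (c j) * (1 - z i * (starRingEnd ℂ) (z j))⁻¹ := by
    rw [hAdef, sum_inner]
    refine Finset.sum_congr rfl fun i _ => ?_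
    rw [inner_sum]
    refine Finset.sum_congr rfl fun j _ => ?_
    rw [inner_smul_left, inner_smul_right, inner_kvec (hzn i) (hzn j), Complex.conj_conj]
    ring
  have hB : ⟪B, B⟫ = ∑ i, ∑ j,
      (c i * f (z i)) * (starRingEnd ℂ) (c j * f (z j)) *
        (1 - z i * (starRingEnd ℂ) (z j))⁻¹ := by
    rw [hBdef, sum_inner]
    refine Finset.sum_congr rfl fun i _ => ?_
    rw [inner_sum]
    refine Finset.sum_congr rfl fun j _ => ?_
    rw [inner_smul_left, inner_smul_right, inner_kvec (hzn i) (hzn j)]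
    simp only [map_mul, Complex.conj_conj]
    ring
  have key : ⟪A, A⟫ - ⟪B, B⟫ = ∑ i, ∑ j,
      c i * (starRingEnd ℂ) (c j) *
        ((1 - f (z i) * (starRingEnd ℂ) (f (z j))) / (1 - z i * (starRingEnd ℂ) (z j))) := by
    rw [hA, hB, ← Finset.sum_sub_distrib]
    refine Finset.sum_congr rfl fun i _ => ?_
    rw [← Finset.sum_sub_distrib]
    refine Finset.sum_congr rfl fun j _ => ?_
    have h := hden i j
    simp only [map_mul]
    field_simp
  have hp1 : 0 ≤ (∑ i, ∑ j, c i * (starRingEnd ℂ) (c j) *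
      ((1 - f (z i) * (starRingEnd ℂ) (f (z j))) / (1 - z i * (starRingEnd ℂ) (z j)))).re :=
    (hpos n z hz c).1
  rw [← key] at hp1
  have eA : (⟪A, A⟫).re = ‖A‖ ^ 2 := by
    rw [← RCLike.re_to_complex]
    exact inner_self_eq_norm_sq A
  have eB : (⟪B, B⟫).re = ‖B‖ ^ 2 := by
    rw [← RCLike.re_to_complex]
    exact inner_self_eq_norm_sq B
  rw [Complex.sub_re, eA, eB] at hp1
  have hsq : ‖B‖ ^ 2 ≤ ‖A‖ ^ 2 := by linarith
  have := Real.sqrt_le_sqrt hsq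
  rwa [Real.sqrt_sq (norm_nonneg _), Real.sqrt_sq (norm_nonneg _)] at this

lemma contractFinset (Δ : Set ℂ) (f : ℂ → ℂ) (hΔsub : Δ ⊆ ball (0 : ℂ) 1)
    (hpos : IsPosKernel Δ
      (fun lam mu => (1 - f lam * (starRingEnd ℂ) (f mu)) / (1 - lam * (starRingEnd ℂ) mu)))
    (s : Finset ℂ) (hs : ↑s ⊆ Δ) (c : ℂ → ℂ) :
    ‖∑ a ∈ s, ((starRingEnd ℂ) (c a) * (starRingEnd ℂ) (f a)) • kvec a‖ ≤
      ‖∑ a ∈ s, (starRingEnd ℂ) (c a) • kvec a‖ := by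
  classical
  set e := s.equivFin with he
  have h1 : ∀ g : ℂ → Hsp, ∑ a ∈ s, g a = ∑ i : Fin s.card, g (e.symm i) := by
    intro g
    rw [← Finset.sum_coe_sort s g]
    exact (Equiv.sum_comp e.symm fun x : s => g (x : ℂ)).symm
  rw [h1, h1]
  exact contractFin Δ f hΔsub hpos s.card (fun i => (e.symm i : ℂ))
    (fun i => hs (e.symm i).2) (fun i => c (e.symm i))

lemma contractSup (Δ : Set ℂ) (f : ℂ → ℂ) (hΔsub : Δ ⊆ ball (0 : ℂ) 1)
    (hpos : IsPosKernel Δ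
      (fun lam mu => (1 - f lam * (starRingEnd ℂ) (f mu)) / (1 - lam * (starRingEnd ℂ) mu)))
    (l : Finsupp.supported ℂ ℂ Δ) : ‖Qsup Δ f l‖ ≤ ‖Psup Δ l‖ := by
  obtain ⟨l, hl⟩ := l
  rw [Finsupp.mem_supported] at hl
  have key := contractFinset Δ f hΔsub hpos l.support hl fun a => (starRingEnd ℂ) (l a)
  have e1 : Psup Δ ⟨l, Finsupp.mem_supported ℂ l |>.2 hl⟩ =
      ∑ a ∈ l.support, (starRingEnd ℂ) ((starRingEnd ℂ) (l a)) • kvec a := by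
    simp only [Psup, Pmap, LinearMap.coe_comp, Function.comp_apply, Submodule.coe_subtype,
      Finsupp.linearCombination_apply, Finsupp.sum, Complex.conj_conj]
  have e2 : Qsup Δ f ⟨l, Finsupp.mem_supported ℂ l |>.2 hl⟩ =
      ∑ a ∈ l.support,
        ((starRingEnd ℂ) ((starRingEnd ℂ) (l a)) * (starRingEnd ℂ) (f a)) • kvec a := by
    simp only [Qsup, Qmap, LinearMap.coe_comp, Function.comp_apply, Submodule.coe_subtype,
      Finsupp.linearCombination_apply, Finsupp.sum, Complex.conj_conj, smul_smul]
  rw [e1, e2]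
  exact key

lemma ker_le (Δ : Set ℂ) (f : ℂ → ℂ) (hΔsub : Δ ⊆ ball (0 : ℂ) 1)
    (hpos : IsPosKernel Δ
      (fun lam mu => (1 - f lam * (starRingEnd ℂ) (f mu)) / (1 - lam * (starRingEnd ℂ) mu))) :
    LinearMap.ker (Psup Δ) ≤ LinearMap.ker (Qsup Δ f) := by
  intro l hl
  rw [LinearMap.mem_ker] at hl ⊢
  have h := contractSup Δ f hΔsub hpos l
  rw [hl, norm_zero] at h
  exact norm_le_zero_iff.1 h

def T0 (Δ : Set ℂ) (f : ℂ → ℂ) (hΔsub : Δ ⊆ ball (0 : ℂ) 1)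
    (hpos : IsPosKernel Δ
      (fun lam mu => (1 - f lam * (starRingEnd ℂ) (f mu)) / (1 - lam * (starRingEnd ℂ) mu))) :
    Msub Δ →ₗ[ℂ] Hsp :=
  ((LinearMap.ker (Psup Δ)).liftQ (Qsup Δ f) (ker_le Δ f hΔsub hpos)).comp
    ((Psup Δ).quotKerEquivRange.symm.toLinearMap)

lemma T0_apply (Δ : Set ℂ) (f : ℂ → ℂ) (hΔsub : Δ ⊆ ball (0 : ℂ) 1)
    (hpos : IsPosKernel Δ
      (fun lam mu => (1 - f lam * (starRingEnd ℂ) (f mu)) / (1 - lam * (starRingEnd ℂ) mu)))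
    (l : Finsupp.supported ℂ ℂ Δ) (h : Psup Δ l ∈ Msub Δ) :
    T0 Δ f hΔsub hpos ⟨Psup Δ l, h⟩ = Qsup Δ f l := by
  have h' : Psup Δ l ∈ LinearMap.range (Psup Δ) := ⟨l, rfl⟩
  have h1 : (Psup Δ).quotKerEquivRange.symm ⟨Psup Δ l, h'⟩ =
      (LinearMap.ker (Psup Δ)).mkQ l :=
    LinearMap.quotKerEquivRange_symm_apply_image (Psup Δ) l h'
  show ((LinearMap.ker (Psup Δ)).liftQ (Qsup Δ f) (ker_le Δ f hΔsub hpos))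
      ((Psup Δ).quotKerEquivRange.symm ⟨Psup Δ l, h'⟩) = Qsup Δ f l
  rw [h1, Submodule.mkQ_apply, Submodule.liftQ_apply]

lemma T0_norm (Δ : Set ℂ) (f : ℂ → ℂ) (hΔsub : Δ ⊆ ball (0 : ℂ) 1)
    (hpos : IsPosKernel Δ
      (fun lam mu => (1 - f lam * (starRingEnd ℂ) (f mu)) / (1 - lam * (starRingEnd ℂ) mu)))
    (x : Msub Δ) : ‖T0 Δ f hΔsub hpos x‖ ≤ 1 * ‖x‖ := by
  obtain ⟨x, hx⟩ := x
  obtain ⟨l, rfl⟩ := hx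
  rw [one_mul, T0_apply Δ f hΔsub hpos l ⟨l, rfl⟩]
  exact contractSup Δ f hΔsub hpos l

def T0L (Δ : Set ℂ) (f : ℂ → ℂ) (hΔsub : Δ ⊆ ball (0 : ℂ) 1)
    (hpos : IsPosKernel Δ
      (fun lam mu => (1 - f lam * (starRingEnd ℂ) (f mu)) / (1 - lam * (starRingEnd ℂ) mu))) :
    Msub Δ →L[ℂ] Hsp :=
  LinearMap.mkContinuous (T0 Δ f hΔsub hpos) 1 (T0_norm Δ f hΔsub hpos)

lemma kvec_mem_Msub (Δ : Set ℂ) {lam : ℂ} (hlam : lam ∈ Δ) : kvec lam ∈ Msub Δ := by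
  have hmem : Finsupp.single lam (1 : ℂ) ∈ Finsupp.supported ℂ ℂ Δ := by
    rw [Finsupp.mem_supported]
    intro a ha
    have := Finsupp.support_single_subset (a := lam) (b := (1 : ℂ)) ha
    simp only [Finset.mem_singleton] at this
    rwa [this]
  refine ⟨⟨Finsupp.single lam 1, hmem⟩, ?_⟩
  simp only [Psup, Pmap, LinearMap.coe_comp, Function.comp_apply, Submodule.coe_subtype,
    Finsupp.linearCombination_single, one_smul]

lemma Msub_dense (Δ : Set ℂ) (hΔopen : IsOpen Δ) (hΔne : Δ.Nonempty)
    (hΔsub : Δ ⊆ ball (0 : ℂ) 1) : (Msub Δ).topologicalClosure = ⊤ := by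
  rw [Submodule.topologicalClosure_eq_top_iff, Submodule.eq_bot_iff]
  intro y hy
  rw [Submodule.mem_orthogonal] at hy
  have hbd : ∀ n, ‖y n‖ ≤ ‖y‖ := fun n => lp.norm_apply_le_norm (by norm_num) y n
  have hvan : ∀ lam ∈ Δ, psum (fun n => y n) lam = 0 := by
    intro lam hlam
    have h1 := hy (kvec lam) (kvec_mem_Msub Δ hlam)
    rwa [inner_kvec_left y (mem_ball_zero_iff.1 (hΔsub hlam))] at h1
  have hzero := eqOn_zero_disk (psum_differentiableOn hbd) hΔopen hΔne hΔsub hvan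
  have hcoef := psum_coeffs_eq_zero (C := ‖y‖) (fun n => y n) hbd hzero
  apply lp.ext
  funext n
  rw [lp.coeFn_zero]
  exact hcoef n

lemma Msub_denseRange (Δ : Set ℂ) (hΔopen : IsOpen Δ) (hΔne : Δ.Nonempty)
    (hΔsub : Δ ⊆ ball (0 : ℂ) 1) : DenseRange ((Msub Δ).subtypeL) := by
  have h := Msub_dense Δ hΔopen hΔne hΔsub
  have hd : Dense ((Msub Δ : Set Hsp)) := by
    rw [dense_iff_closure_eq, ← Submodule.topologicalClosure_coe, h]
    rfl
  rw [Submodule.coe_subtypeL']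
  exact hd.denseRange_val

lemma Msub_uniformInducing (Δ : Set ℂ) : IsUniformInducing ⇑(Msub Δ).subtypeL := by
  rw [Submodule.coe_subtypeL']
  exact isometry_subtype_coe.isUniformInducing

def That (Δ : Set ℂ) (f : ℂ → ℂ) (hΔopen : IsOpen Δ) (hΔne : Δ.Nonempty)
    (hΔsub : Δ ⊆ ball (0 : ℂ) 1)
    (hpos : IsPosKernel Δ
      (fun lam mu => (1 - f lam * (starRingEnd ℂ) (f mu)) / (1 - lam * (starRingEnd ℂ) mu))) :
    Hsp →L[ℂ] Hsp :=
  (T0L Δ f hΔsub hpos).extend (Msub Δ).subtypeL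

lemma That_apply_mem (Δ : Set ℂ) (f : ℂ → ℂ) (hΔopen : IsOpen Δ) (hΔne : Δ.Nonempty)
    (hΔsub : Δ ⊆ ball (0 : ℂ) 1)
    (hpos : IsPosKernel Δ
      (fun lam mu => (1 - f lam * (starRingEnd ℂ) (f mu)) / (1 - lam * (starRingEnd ℂ) mu)))
    {x : Hsp} (hx : x ∈ Msub Δ) :
    That Δ f hΔopen hΔne hΔsub hpos x = T0 Δ f hΔsub hpos ⟨x, hx⟩ := by
  have h := ContinuousLinearMap.extend_eq (T0L Δ f hΔsub hpos)
    (Msub_denseRange Δ hΔopen hΔne hΔsub) (Msub_uniformInducing Δ) ⟨x, hx⟩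
  simpa [That, T0L] using h

lemma That_kvec (Δ : Set ℂ) (f : ℂ → ℂ) (hΔopen : IsOpen Δ) (hΔne : Δ.Nonempty)
    (hΔsub : Δ ⊆ ball (0 : ℂ) 1)
    (hpos : IsPosKernel Δ
      (fun lam mu => (1 - f lam * (starRingEnd ℂ) (f mu)) / (1 - lam * (starRingEnd ℂ) mu)))
    {lam : ℂ} (hlam : lam ∈ Δ) :
    That Δ f hΔopen hΔne hΔsub hpos (kvec lam) = (starRingEnd ℂ) (f lam) • kvec lam := by
  have hmem : Finsupp.single lam (1 : ℂ) ∈ Finsupp.supported ℂ ℂ Δ := by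
    rw [Finsupp.mem_supported]
    intro a ha
    have := Finsupp.support_single_subset (a := lam) (b := (1 : ℂ)) ha
    simp only [Finset.mem_singleton] at this
    rwa [this]
  have hP : Psup Δ ⟨Finsupp.single lam 1, hmem⟩ = kvec lam := by
    simp only [Psup, Pmap, LinearMap.coe_comp, Function.comp_apply, Submodule.coe_subtype,
      Finsupp.linearCombination_single, one_smul]
  have hQ : Qsup Δ f ⟨Finsupp.single lam 1, hmem⟩ = (starRingEnd ℂ) (f lam) • kvec lam := by
    simp only [Qsup, Qmap, LinearMap.coe_comp, Function.comp_apply, Submodule.coe_subtype,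
      Finsupp.linearCombination_single, one_smul]
  have hmem2 : kvec lam ∈ Msub Δ := kvec_mem_Msub Δ hlam
  rw [That_apply_mem Δ f hΔopen hΔne hΔsub hpos hmem2]
  have hx : (⟨kvec lam, hmem2⟩ : Msub Δ) = ⟨Psup Δ ⟨Finsupp.single lam 1, hmem⟩, by rw [hP]; exact hmem2⟩ :=
    Subtype.ext hP.symm
  rw [hx, T0_apply Δ f hΔsub hpos, hQ]

lemma That_norm (Δ : Set ℂ) (f : ℂ → ℂ) (hΔopen : IsOpen Δ) (hΔne : Δ.Nonempty)
    (hΔsub : Δ ⊆ ball (0 : ℂ) 1)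
    (hpos : IsPosKernel Δ
      (fun lam mu => (1 - f lam * (starRingEnd ℂ) (f mu)) / (1 - lam * (starRingEnd ℂ) mu)))
    (x : Hsp) : ‖That Δ f hΔopen hΔne hΔsub hpos x‖ ≤ ‖x‖ := by
  refine (Msub_denseRange Δ hΔopen hΔne hΔsub).induction_on x
    (isClosed_le ((That Δ f hΔopen hΔne hΔsub hpos).continuous.norm) continuous_norm) ?_
  intro a
  have h1 : ((Msub Δ).subtypeL a : Hsp) = (a : Hsp) := rfl
  rw [h1, That_apply_mem Δ f hΔopen hΔne hΔsub hpos a.2]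
  have h2 : (⟨(a : Hsp), a.2⟩ : Msub Δ) = a := Subtype.ext rfl
  rw [h2]
  have := T0_norm Δ f hΔsub hpos a
  rwa [one_mul] at this

/-! ### The Schur function and its properties -/

def gvec (Δ : Set ℂ) (f : ℂ → ℂ) (hΔopen : IsOpen Δ) (hΔne : Δ.Nonempty)
    (hΔsub : Δ ⊆ ball (0 : ℂ) 1)
    (hpos : IsPosKernel Δ
      (fun lam mu => (1 - f lam * (starRingEnd ℂ) (f mu)) / (1 - lam * (starRingEnd ℂ) mu))) :
    Hsp :=
  ContinuousLinearMap.adjoint (That Δ f hΔopen hΔne hΔsub hpos) (lp.single 2 0 (1 : ℂ))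

def Sfun (Δ : Set ℂ) (f : ℂ → ℂ) (hΔopen : IsOpen Δ) (hΔne : Δ.Nonempty)
    (hΔsub : Δ ⊆ ball (0 : ℂ) 1)
    (hpos : IsPosKernel Δ
      (fun lam mu => (1 - f lam * (starRingEnd ℂ) (f mu)) / (1 - lam * (starRingEnd ℂ) mu))) :
    ℂ → ℂ :=
  psum fun n => (gvec Δ f hΔopen hΔne hΔsub hpos) n

lemma gvec_bound (Δ : Set ℂ) (f : ℂ → ℂ) (hΔopen : IsOpen Δ) (hΔne : Δ.Nonempty)
    (hΔsub : Δ ⊆ ball (0 : ℂ) 1)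
    (hpos : IsPosKernel Δ
      (fun lam mu => (1 - f lam * (starRingEnd ℂ) (f mu)) / (1 - lam * (starRingEnd ℂ) mu))) :
    ∀ n, ‖(gvec Δ f hΔopen hΔne hΔsub hpos) n‖ ≤ ‖gvec Δ f hΔopen hΔne hΔsub hpos‖ :=
  fun n => lp.norm_apply_le_norm (by norm_num) _ n

lemma Sfun_diff (Δ : Set ℂ) (f : ℂ → ℂ) (hΔopen : IsOpen Δ) (hΔne : Δ.Nonempty)
    (hΔsub : Δ ⊆ ball (0 : ℂ) 1)
    (hpos : IsPosKernel Δ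
      (fun lam mu => (1 - f lam * (starRingEnd ℂ) (f mu)) / (1 - lam * (starRingEnd ℂ) mu))) :
    DifferentiableOn ℂ (Sfun Δ f hΔopen hΔne hΔsub hpos) (ball (0 : ℂ) 1) :=
  psum_differentiableOn (gvec_bound Δ f hΔopen hΔne hΔsub hpos)

lemma Sfun_eq_inner (Δ : Set ℂ) (f : ℂ → ℂ) (hΔopen : IsOpen Δ) (hΔne : Δ.Nonempty)
    (hΔsub : Δ ⊆ ball (0 : ℂ) 1)
    (hpos : IsPosKernel Δ
      (fun lam mu => (1 - f lam * (starRingEnd ℂ) (f mu)) / (1 - lam * (starRingEnd ℂ) mu)))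
    {z : ℂ} (hz : ‖z‖ < 1) :
    Sfun Δ f hΔopen hΔne hΔsub hpos z = ⟪kvec z, gvec Δ f hΔopen hΔne hΔsub hpos⟫ :=
  (inner_kvec_left _ hz).symm

lemma Sfun_eq_f (Δ : Set ℂ) (f : ℂ → ℂ) (hΔopen : IsOpen Δ) (hΔne : Δ.Nonempty)
    (hΔsub : Δ ⊆ ball (0 : ℂ) 1)
    (hpos : IsPosKernel Δ
      (fun lam mu => (1 - f lam * (starRingEnd ℂ) (f mu)) / (1 - lam * (starRingEnd ℂ) mu)))
    {lam : ℂ} (hlam : lam ∈ Δ) : Sfun Δ f hΔopen hΔne hΔsub hpos lam = f lam := by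
  have hl1 : ‖lam‖ < 1 := mem_ball_zero_iff.1 (hΔsub hlam)
  rw [Sfun_eq_inner Δ f hΔopen hΔne hΔsub hpos hl1]
  unfold gvec
  rw [ContinuousLinearMap.adjoint_inner_right]
  rw [That_kvec Δ f hΔopen hΔne hΔsub hpos hlam]
  rw [inner_smul_left]
  rw [lp.inner_single_right]
  rw [RCLike.inner_apply]
  rw [kvec_apply hl1 0]
  simp

lemma That_kvec_all (Δ : Set ℂ) (f : ℂ → ℂ) (hΔopen : IsOpen Δ) (hΔne : Δ.Nonempty)
    (hΔsub : Δ ⊆ ball (0 : ℂ) 1)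
    (hpos : IsPosKernel Δ
      (fun lam mu => (1 - f lam * (starRingEnd ℂ) (f mu)) / (1 - lam * (starRingEnd ℂ) mu)))
    {z : ℂ} (hz : ‖z‖ < 1) :
    That Δ f hΔopen hΔne hΔsub hpos (kvec z) =
      ⟪gvec Δ f hΔopen hΔne hΔsub hpos, kvec z⟫ • kvec z := by
  set T := That Δ f hΔopen hΔne hΔsub hpos with hT
  set g := gvec Δ f hΔopen hΔne hΔsub hpos with hg
  apply ext_inner_left ℂ
  intro y
  rw [inner_smul_right]
  set ay := ContinuousLinearMap.adjoint T y with hay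
  have hb1 : ∀ n, ‖(starRingEnd ℂ) (ay n)‖ ≤ ‖ay‖ := fun n => by
    rw [RCLike.norm_conj]; exact lp.norm_apply_le_norm (by norm_num) _ n
  have hb2 : ∀ n, ‖(starRingEnd ℂ) (g n)‖ ≤ ‖g‖ := fun n => by
    rw [RCLike.norm_conj]; exact lp.norm_apply_le_norm (by norm_num) _ n
  have hb3 : ∀ n, ‖(starRingEnd ℂ) (y n)‖ ≤ ‖y‖ := fun n => by
    rw [RCLike.norm_conj]; exact lp.norm_apply_le_norm (by norm_num) _ n
  have hdiff : DifferentiableOn ℂ (fun w => psum (fun n => (starRingEnd ℂ) (ay n)) w -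
      psum (fun n => (starRingEnd ℂ) (g n)) w * psum (fun n => (starRingEnd ℂ) (y n)) w)
      (ball (0 : ℂ) 1) :=
    (psum_differentiableOn hb1).sub
      ((psum_differentiableOn hb2).mul (psum_differentiableOn hb3))
  have hVopen : IsOpen ((starRingEnd ℂ) ⁻¹' Δ) := hΔopen.preimage Complex.continuous_conj
  have hVne : ((starRingEnd ℂ) ⁻¹' Δ).Nonempty := by
    obtain ⟨lam, hlam⟩ := hΔne
    exact ⟨(starRingEnd ℂ) lam, by simpa [Complex.conj_conj] using hlam⟩
  have hVsub : ((starRingEnd ℂ) ⁻¹' Δ) ⊆ ball (0 : ℂ) 1 := by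
    intro w hw
    rw [mem_ball_zero_iff]
    have h2 := mem_ball_zero_iff.1 (hΔsub hw)
    rwa [RCLike.norm_conj] at h2
  have hvanV : ∀ w ∈ (starRingEnd ℂ) ⁻¹' Δ,
      psum (fun n => (starRingEnd ℂ) (ay n)) w -
        psum (fun n => (starRingEnd ℂ) (g n)) w *
          psum (fun n => (starRingEnd ℂ) (y n)) w = 0 := by
    intro w hw
    have hlam : (starRingEnd ℂ) w ∈ Δ := hw
    have hcw : ‖(starRingEnd ℂ) w‖ < 1 := mem_ball_zero_iff.1 (hΔsub hlam)
    have hwcc : (starRingEnd ℂ) ((starRingEnd ℂ) w) = w := Complex.conj_conj w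
    have h1 : psum (fun n => (starRingEnd ℂ) (ay n)) w = ⟪ay, kvec ((starRingEnd ℂ) w)⟫ := by
      rw [inner_kvec_right ay hcw, hwcc]
    have h2 : psum (fun n => (starRingEnd ℂ) (g n)) w = ⟪g, kvec ((starRingEnd ℂ) w)⟫ := by
      rw [inner_kvec_right g hcw, hwcc]
    have h3 : psum (fun n => (starRingEnd ℂ) (y n)) w = ⟪y, kvec ((starRingEnd ℂ) w)⟫ := by
      rw [inner_kvec_right y hcw, hwcc]
    have hadj : ⟪ay, kvec ((starRingEnd ℂ) w)⟫ = ⟪y, T (kvec ((starRingEnd ℂ) w))⟫ := by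
      rw [hay]
      exact ContinuousLinearMap.adjoint_inner_left T (kvec ((starRingEnd ℂ) w)) y
    have hTk : T (kvec ((starRingEnd ℂ) w)) =
        (starRingEnd ℂ) (f ((starRingEnd ℂ) w)) • kvec ((starRingEnd ℂ) w) := by
      rw [hT]
      exact That_kvec Δ f hΔopen hΔne hΔsub hpos hlam
    have hgk : ⟪g, kvec ((starRingEnd ℂ) w)⟫ = (starRingEnd ℂ) (f ((starRingEnd ℂ) w)) := by
      rw [← inner_conj_symm]
      rw [← Sfun_eq_inner Δ f hΔopen hΔne hΔsub hpos hcw]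
      rw [Sfun_eq_f Δ f hΔopen hΔne hΔsub hpos hlam]
    rw [h1, h2, h3, hadj, hTk, hgk, inner_smul_right]
    ring
  have hall := eqOn_zero_disk hdiff hVopen hVne hVsub hvanV
  have hcz : ‖(starRingEnd ℂ) z‖ < 1 := by rwa [RCLike.norm_conj]
  have hzz := hall ((starRingEnd ℂ) z) (mem_ball_zero_iff.2 hcz)
  rw [sub_eq_zero] at hzz
  have e1 : psum (fun n => (starRingEnd ℂ) (ay n)) ((starRingEnd ℂ) z) = ⟪y, T (kvec z)⟫ := by
    rw [← inner_kvec_right ay hz, hay]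
    exact ContinuousLinearMap.adjoint_inner_left T (kvec z) y
  have e2 : psum (fun n => (starRingEnd ℂ) (g n)) ((starRingEnd ℂ) z) = ⟪g, kvec z⟫ :=
    (inner_kvec_right g hz).symm
  have e3 : psum (fun n => (starRingEnd ℂ) (y n)) ((starRingEnd ℂ) z) = ⟪y, kvec z⟫ :=
    (inner_kvec_right y hz).symm
  rw [e1, e2, e3] at hzz
  exact hzz

lemma Sfun_bound (Δ : Set ℂ) (f : ℂ → ℂ) (hΔopen : IsOpen Δ) (hΔne : Δ.Nonempty)
    (hΔsub : Δ ⊆ ball (0 : ℂ) 1)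
    (hpos : IsPosKernel Δ
      (fun lam mu => (1 - f lam * (starRingEnd ℂ) (f mu)) / (1 - lam * (starRingEnd ℂ) mu)))
    {z : ℂ} (hz : ‖z‖ < 1) : ‖Sfun Δ f hΔopen hΔne hΔsub hpos z‖ ≤ 1 := by
  have h := That_kvec_all Δ f hΔopen hΔne hΔsub hpos hz
  have hn := That_norm Δ f hΔopen hΔne hΔsub hpos (kvec z)
  rw [h, norm_smul] at hn
  have hkpos : 0 < ‖kvec z‖ := norm_pos_iff.2 (kvec_ne_zero hz)
  have hc : ‖⟪gvec Δ f hΔopen hΔne hΔsub hpos, kvec z⟫‖ ≤ 1 :=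
    (mul_le_iff_le_one_left hkpos).1 hn
  rw [Sfun_eq_inner Δ f hΔopen hΔne hΔsub hpos hz, ← inner_conj_symm]
  rwa [RCLike.norm_conj]

end SchurAux

end SchurAux

/-- If the kernel `(1 - f(λ) conj(f(μ)))/(1 - λ conj(μ))` is positive on a nonempty open
subset `Δ` of the open unit disk, then `f` extends uniquely to a Schur function on the disk. -/
theorem exists_unique_schur_extension
    (Δ : Set ℂ) (hΔopen : IsOpen Δ) (hΔne : Δ.Nonempty) (hΔsub : Δ ⊆ unitDisk)
    (f : ℂ → ℂ)
    (hpos : IsPosKernel Δ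
      (fun lam mu => (1 - f lam * (starRingEnd ℂ) (f mu)) / (1 - lam * (starRingEnd ℂ) mu))) :
    ∃ S : ℂ → ℂ, IsSchur S ∧ (∀ lam ∈ Δ, S lam = f lam) ∧
      ∀ S' : ℂ → ℂ, IsSchur S' → (∀ lam ∈ Δ, S' lam = f lam) →
        ∀ z ∈ unitDisk, S' z = S z := by
  have hΔsub' : Δ ⊆ ball (0 : ℂ) 1 := hΔsub
  refine ⟨SchurAux.Sfun Δ f hΔopen hΔne hΔsub' hpos, ⟨?_, ?_⟩, ?_, ?_⟩
  · exact SchurAux.Sfun_diff Δ f hΔopen hΔne hΔsub' hpos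
  · intro z hz
    exact SchurAux.Sfun_bound Δ f hΔopen hΔne hΔsub' hpos (mem_ball_zero_iff.1 hz)
  · intro lam hlam
    exact SchurAux.Sfun_eq_f Δ f hΔopen hΔne hΔsub' hpos hlam
  · intro S' hS' hSf' z hz
    have hdiff : DifferentiableOn ℂ
        (fun w => S' w - SchurAux.Sfun Δ f hΔopen hΔne hΔsub' hpos w) (ball (0 : ℂ) 1) :=
      hS'.1.sub (SchurAux.Sfun_diff Δ f hΔopen hΔne hΔsub' hpos)
    have hvan : ∀ w ∈ Δ, S' w - SchurAux.Sfun Δ f hΔopen hΔne hΔsub' hpos w = 0 := by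
      intro w hw
      rw [hSf' w hw, SchurAux.Sfun_eq_f Δ f hΔopen hΔne hΔsub' hpos hw, sub_self]
    have hz' : z ∈ ball (0 : ℂ) 1 := hz
    have := SchurAux.eqOn_zero_disk hdiff hΔopen hΔne hΔsub' hvan z hz'
    exact sub_eq_zero.1 this
end

section
/- Let σ : 𝔻 → ℂ and S : 𝔻 → ℂ be analytic on 𝔻 with σ(𝔻) ⊆ 𝔻, and suppose σ is injective on some nonempty open subset U ⊆ 𝔻. If the kernel K(z, w) = (1 − S(z)·conj(S(w)))/(1 − σ(z)·conj(σ(w))) is positive on U, then there exists a Schur function 𝒮 : 𝔻 → ℂ such that S(z) = 𝒮(σ(z)) for all z ∈ 𝔻. -/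
open Complex Metric

noncomputable section SchurAux
open scoped ENNReal NNReal Topology

abbrev H2 : Type := lp (fun _ : ℕ => ℂ) 2

namespace SchurAux

lemma meml2_geom {w : ℂ} (hw : ‖w‖ < 1) :
    Memℓp (fun n : ℕ => (starRingEnd ℂ) w ^ n) 2 := by
  apply memℓp_gen
  have h2 : (2 : ℝ≥0∞).toReal = 2 := by norm_num
  rw [h2]
  have : ∀ n : ℕ, ‖(starRingEnd ℂ) w ^ n‖ ^ (2:ℝ) = (‖w‖^2) ^ n := by
    intro n
    rw [norm_pow, RCLike.norm_conj,
      show (2:ℝ) = ((2:ℕ):ℝ) by norm_num, Real.rpow_natCast, ← pow_mul, ← pow_mul, mul_comm]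
  simp_rw [this]
  exact summable_geometric_of_lt_one (by positivity)
    (by nlinarith [norm_nonneg w])

/-- The Szegő kernel vector `k_w = (conj w ^ n)_n`. -/
def kk (w : ℂ) (hw : ‖w‖ < 1) : H2 := ⟨fun n => (starRingEnd ℂ) w ^ n, meml2_geom hw⟩

@[simp] lemma kk_apply (w : ℂ) (hw : ‖w‖ < 1) (n : ℕ) :
    (kk w hw : ∀ _ : ℕ, ℂ) n = (starRingEnd ℂ) w ^ n := rfl

lemma kk_ne_zero (w : ℂ) (hw : ‖w‖ < 1) : kk w hw ≠ 0 := by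
  intro h
  have : (kk w hw : ∀ _ : ℕ, ℂ) 0 = 0 := by rw [h]; rfl
  simp at this

lemma hasSum_kk (w : ℂ) (hw : ‖w‖ < 1) :
    HasSum (fun n : ℕ => ((starRingEnd ℂ) w) ^ n • lp.single 2 n (1:ℂ)) (kk w hw) := by
  have := lp.hasSum_single (E := fun _ : ℕ => ℂ) (p := 2) (by norm_num) (kk w hw)
  convert this using 2 with n
  rw [kk_apply, ← lp.single_smul]
  norm_num

lemma inner_kk (w z : ℂ) (hw : ‖w‖ < 1) (hz : ‖z‖ < 1) :
    (inner ℂ (kk w hw) (kk z hz) : ℂ) = (1 - w * (starRingEnd ℂ) z)⁻¹ := by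
  rw [lp.inner_eq_tsum]
  have : ∀ n : ℕ, (starRingEnd ℂ) ((kk w hw : ∀ _ : ℕ, ℂ) n) * (kk z hz : ∀ _ : ℕ, ℂ) n
      = (w * (starRingEnd ℂ) z) ^ n := by
    intro n
    simp [mul_pow, map_pow]
  have heq : (fun n : ℕ => (inner ℂ ((kk w hw : ∀ _ : ℕ, ℂ) n) ((kk z hz : ∀ _ : ℕ, ℂ) n) : ℂ))
      = fun n => (w * (starRingEnd ℂ) z) ^ n := by
    funext n
    rw [RCLike.inner_apply, mul_comm]
    exact this n
  rw [heq]
  rw [tsum_geometric_of_norm_lt_one (by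
    calc ‖w * (starRingEnd ℂ) z‖ = ‖w‖ * ‖z‖ := by simp [norm_mul]
    _ < 1 := by nlinarith [norm_nonneg w, norm_nonneg z])]

/-- Coordinate evaluation as a continuous linear map. -/
def coordL (m : ℕ) : H2 →L[ℂ] ℂ :=
  LinearMap.mkContinuous
    { toFun := fun f => (f : ∀ _ : ℕ, ℂ) m
      map_add' := fun f g => by simp [lp.coeFn_add]
      map_smul' := fun c f => by simp [lp.coeFn_smul] } 1
    (fun f => by rw [one_mul]; exact lp.norm_apply_le_norm (by norm_num) f m)

@[simp] lemma coordL_apply (m : ℕ) (f : H2) : coordL m f = (f : ∀ _ : ℕ, ℂ) m := rfl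

lemma psum_summable_s1 {c : ℕ → ℂ} {C : ℝ} (hc : ∀ n, ‖c n‖ ≤ C) {z : ℂ} (hz : ‖z‖ < 1) :
    Summable (fun n : ℕ => c n * z ^ n) := by
  apply Summable.of_norm_bounded (g := fun n => C * ‖z‖^n)
    ((summable_geometric_of_lt_one (norm_nonneg z) hz).mul_left C)
  intro n; rw [norm_mul, norm_pow]
  exact mul_le_mul_of_nonneg_right (hc n) (by positivity)

lemma psum_analytic {c : ℕ → ℂ} {C : ℝ} (hc : ∀ n, ‖c n‖ ≤ C) :
    AnalyticOnNhd ℂ (fun z => ∑' n : ℕ, c n * z ^ n) (ball (0:ℂ) 1) := by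
  set p := FormalMultilinearSeries.ofScalars ℂ c with hp
  have hrad : 1 ≤ p.radius := by
    apply p.le_radius_of_bound C
    intro n
    rw [NNReal.coe_one, one_pow, mul_one]
    calc ‖p n‖ ≤ ‖c n‖ * ‖ContinuousMultilinearMap.mkPiAlgebraFin ℂ n ℂ‖ :=
          (norm_smul (c n) (ContinuousMultilinearMap.mkPiAlgebraFin ℂ n ℂ)).le
    _ ≤ ‖c n‖ * 1 := by
        gcongr
        exact le_of_eq (ContinuousMultilinearMap.norm_mkPiAlgebraFin)
    _ ≤ C := by rw [mul_one]; exact hc n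
  have h0 : 0 < p.radius := lt_of_lt_of_le (by norm_num) hrad
  have hball := p.hasFPowerSeriesOnBall h0
  have hsum : (fun z : ℂ => ∑' n : ℕ, c n * z ^ n) = p.sum := by
    funext z
    rw [FormalMultilinearSeries.sum]
    refine tsum_congr fun n => ?_
    rw [hp, FormalMultilinearSeries.ofScalars_apply_eq, smul_eq_mul]
  rw [hsum]
  intro z hz
  refine hball.analyticAt_of_mem ?_
  have hz1 : ‖z‖₊ < 1 := by
    rw [← NNReal.coe_lt_coe]
    simpa using mem_ball_zero_iff.mp hz
  rw [EMetric.mem_ball, edist_eq_enorm_sub, sub_zero, enorm_eq_nnnorm]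
  calc (‖z‖₊ : ℝ≥0∞) < 1 := by exact_mod_cast hz1
  _ ≤ p.radius := hrad

lemma psum_coeff_eq_zero {c : ℕ → ℂ} {C : ℝ} (hc : ∀ n, ‖c n‖ ≤ C)
    (h : ∀ z ∈ ball (0:ℂ) 1, ∑' n : ℕ, c n * z ^ n = 0) : ∀ n, c n = 0 := by
  set p := FormalMultilinearSeries.ofScalars ℂ c with hp
  have hrad : 1 ≤ p.radius := by
    apply p.le_radius_of_bound C
    intro n
    rw [NNReal.coe_one, one_pow, mul_one]
    calc ‖p n‖ ≤ ‖c n‖ * ‖ContinuousMultilinearMap.mkPiAlgebraFin ℂ n ℂ‖ :=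
          (norm_smul (c n) (ContinuousMultilinearMap.mkPiAlgebraFin ℂ n ℂ)).le
    _ ≤ ‖c n‖ * 1 := by
        gcongr
        exact le_of_eq (ContinuousMultilinearMap.norm_mkPiAlgebraFin)
    _ ≤ C := by rw [mul_one]; exact hc n
  have h0 : 0 < p.radius := lt_of_lt_of_le (by norm_num) hrad
  have hball := p.hasFPowerSeriesOnBall h0
  have hsum : (fun z : ℂ => ∑' n : ℕ, c n * z ^ n) = p.sum := by
    funext z
    rw [FormalMultilinearSeries.sum]
    refine tsum_congr fun n => ?_
    rw [hp, FormalMultilinearSeries.ofScalars_apply_eq, smul_eq_mul]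
  have hev : p.sum =ᶠ[nhds (0:ℂ)] (0 : ℂ → ℂ) := by
    filter_upwards [ball_mem_nhds (0:ℂ) one_pos] with z hz
    rw [← hsum]
    exact h z hz
  have hzero : p = 0 := (hball.hasFPowerSeriesAt.congr hev).eq_zero
  intro n
  have : p n = 0 := by rw [hzero]; rfl
  rwa [hp, FormalMultilinearSeries.ofScalars_eq_zero] at this

lemma vanish_of_vanish_on_image
    (σ : ℂ → ℂ) (hσ : DifferentiableOn ℂ σ (ball (0:ℂ) 1))
    (hσmap : ∀ z ∈ ball (0:ℂ) 1, σ z ∈ ball (0:ℂ) 1)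
    (U : Set ℂ) (hUopen : IsOpen U) (hUne : U.Nonempty) (hUsub : U ⊆ ball (0:ℂ) 1)
    (hinj : Set.InjOn σ U)
    (F : ℂ → ℂ) (hF : AnalyticOnNhd ℂ F (ball (0:ℂ) 1))
    (h0 : ∀ u ∈ U, F (σ u) = 0) :
    ∀ z ∈ ball (0:ℂ) 1, F z = 0 := by
  obtain ⟨z₀, hz₀⟩ := hUne
  obtain ⟨r, hr, hball⟩ := Metric.isOpen_iff.mp hUopen z₀ hz₀
  set a : ℕ → ℝ := fun k => (r/2) * (1/((k:ℝ)+1)) with ha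
  have hapos : ∀ k, 0 < a k := by
    intro k
    apply mul_pos (by linarith)
    positivity
  have hasmall : ∀ k, a k ≤ r / 2 := by
    intro k
    rw [ha]
    calc (r/2) * (1/((k:ℝ)+1)) ≤ (r/2) * 1 := by
          apply mul_le_mul_of_nonneg_left _ (by linarith)
          rw [div_le_one (by positivity)]
          simp
    _ = r/2 := mul_one _
  set u : ℕ → ℂ := fun k => z₀ + (a k : ℂ) with hu
  have humem : ∀ k, u k ∈ U := by
    intro k
    apply hball
    rw [mem_ball, hu, dist_eq_norm]
    simp only [add_sub_cancel_left]
    rw [Complex.norm_real, Real.norm_eq_abs, abs_of_pos (hapos k)]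
    linarith [hasmall k]
  have hune : ∀ k, u k ≠ z₀ := by
    intro k h
    rw [hu] at h
    have : (a k : ℂ) = 0 := by
      have := congrArg (fun x => x - z₀) h
      simpa using this
    exact_mod_cast (hapos k).ne' (by exact_mod_cast this)
  have hlim : Filter.Tendsto u Filter.atTop (nhds z₀) := by
    have h1 : Filter.Tendsto (fun k : ℕ => 1/((k:ℝ)+1)) Filter.atTop (nhds 0) :=
      tendsto_one_div_add_atTop_nhds_zero_nat
    have h2 : Filter.Tendsto a Filter.atTop (nhds 0) := by
      rw [ha]
      simpa using h1.const_mul (r/2)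
    have h3 : Filter.Tendsto (fun k => (a k : ℂ)) Filter.atTop (nhds (0:ℂ)) := by
      have := (Complex.continuous_ofReal.tendsto (0:ℝ)).comp h2
      simpa [Function.comp_def] using this
    have := h3.const_add z₀
    simpa using this
  have hcont : ContinuousAt σ z₀ :=
    hσ.continuousOn.continuousAt (isOpen_ball.mem_nhds (hUsub hz₀))
  have htend : Filter.Tendsto (fun k => σ (u k)) Filter.atTop
      (nhdsWithin (σ z₀) {(σ z₀)}ᶜ) := by
    rw [tendsto_nhdsWithin_iff]
    refine ⟨hcont.tendsto.comp hlim, Filter.Eventually.of_forall fun k => ?_⟩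
    exact hinj.ne (humem k) hz₀ (hune k)
  have hfreq : ∃ᶠ w in nhdsWithin (σ z₀) {(σ z₀)}ᶜ, F w = 0 :=
    htend.frequently (Filter.Frequently.of_forall fun k => h0 (u k) (humem k))
  have := hF.eqOn_zero_of_preconnected_of_frequently_eq_zero
    ((convex_ball (0:ℂ) 1).isPreconnected) (hσmap z₀ (hUsub hz₀)) hfreq
  exact fun z hz => this hz

lemma norm_ineq (σ S : ℂ → ℂ) (U : Set ℂ) (hUsub : U ⊆ ball (0:ℂ) 1)
    (hσmap : ∀ z ∈ ball (0:ℂ) 1, σ z ∈ ball (0:ℂ) 1)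
    (hpos : IsPosKernel U
      (fun z w => (1 - S z * (starRingEnd ℂ) (S w)) / (1 - σ z * (starRingEnd ℂ) (σ w))))
    (n : ℕ) (z : Fin n → ℂ) (hz : ∀ i, z i ∈ U) (hzd : ∀ i, ‖σ (z i)‖ < 1)
    (a : Fin n → ℂ) :
    ‖∑ i, (a i * (starRingEnd ℂ) (S (z i))) • kk (σ (z i)) (hzd i)‖ ≤
      ‖∑ i, a i • kk (σ (z i)) (hzd i)‖ := by
  set A : H2 := ∑ i, a i • kk (σ (z i)) (hzd i) with hA
  set B : H2 := ∑ i, (a i * (starRingEnd ℂ) (S (z i))) • kk (σ (z i)) (hzd i) with hB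
  have hAA : (inner ℂ A A : ℂ) =
      ∑ i, ∑ j, (starRingEnd ℂ) (a i) * a j *
        (1 - σ (z i) * (starRingEnd ℂ) (σ (z j)))⁻¹ := by
    rw [hA, sum_inner]
    refine Finset.sum_congr rfl fun i _ => ?_
    rw [inner_sum]
    refine Finset.sum_congr rfl fun j _ => ?_
    rw [inner_smul_left, inner_smul_right, inner_kk]
    ring
  have hBB : (inner ℂ B B : ℂ) =
      ∑ i, ∑ j, (starRingEnd ℂ) (a i) * a j * S (z i) * (starRingEnd ℂ) (S (z j)) *
        (1 - σ (z i) * (starRingEnd ℂ) (σ (z j)))⁻¹ := by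
    rw [hB, sum_inner]
    refine Finset.sum_congr rfl fun i _ => ?_
    rw [inner_sum]
    refine Finset.sum_congr rfl fun j _ => ?_
    rw [inner_smul_left, inner_smul_right, inner_kk]
    simp only [map_mul, RingHomCompTriple.comp_apply, starRingEnd_self_apply, RingHom.id_apply]
    ring
  have key : (∑ i, ∑ j, (fun i0 => (starRingEnd ℂ) (a i0)) i *
        (starRingEnd ℂ) ((fun i0 => (starRingEnd ℂ) (a i0)) j) *
        ((1 - S (z i) * (starRingEnd ℂ) (S (z j))) /
          (1 - σ (z i) * (starRingEnd ℂ) (σ (z j)))))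
      = (inner ℂ A A : ℂ) - (inner ℂ B B : ℂ) := by
    rw [hAA, hBB, ← Finset.sum_sub_distrib]
    refine Finset.sum_congr rfl fun i _ => ?_
    rw [← Finset.sum_sub_distrib]
    refine Finset.sum_congr rfl fun j _ => ?_
    simp only [RingHomCompTriple.comp_apply, starRingEnd_self_apply, RingHom.id_apply]
    rw [div_eq_mul_inv]
    ring
  obtain ⟨hre, _⟩ := hpos n z hz (fun i => (starRingEnd ℂ) (a i))
  rw [key] at hre
  have h1 : ((inner ℂ A A : ℂ) - (inner ℂ B B : ℂ)).re = ‖A‖^2 - ‖B‖^2 := by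
    rw [Complex.sub_re]
    congr 1
    · exact inner_self_eq_norm_sq (𝕜 := ℂ) A
    · exact inner_self_eq_norm_sq (𝕜 := ℂ) B
  rw [h1] at hre
  nlinarith [norm_nonneg A, norm_nonneg B]

lemma exists_contraction (σ S : ℂ → ℂ)
    (hσ : DifferentiableOn ℂ σ (ball (0:ℂ) 1))
    (hσmap : ∀ z ∈ ball (0:ℂ) 1, σ z ∈ ball (0:ℂ) 1)
    (U : Set ℂ) (hUopen : IsOpen U) (hUne : U.Nonempty) (hUsub : U ⊆ ball (0:ℂ) 1)
    (hinj : Set.InjOn σ U)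
    (hpos : IsPosKernel U
      (fun z w => (1 - S z * (starRingEnd ℂ) (S w)) / (1 - σ z * (starRingEnd ℂ) (σ w))))
    (hd : ∀ u : ℂ, u ∈ U → ‖σ u‖ < 1) :
    ∃ X : H2 →L[ℂ] H2, ‖X‖ ≤ 1 ∧ ∀ (u : ℂ) (hu : u ∈ U),
      X (kk (σ u) (hd u hu)) = (starRingEnd ℂ) (S u) • kk (σ u) (hd u hu) := by
  classical
  set v : ↥U → H2 := fun u => kk (σ u) (hd u u.2) with hv
  set w : ↥U → H2 := fun u => (starRingEnd ℂ) (S u) • v u with hw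
  set Φ : (↥U →₀ ℂ) →ₗ[ℂ] H2 := Finsupp.linearCombination ℂ v with hΦ
  set Ψ : (↥U →₀ ℂ) →ₗ[ℂ] H2 := Finsupp.linearCombination ℂ w with hΨ
  -- the crucial norm bound coming from positivity of the kernel
  have bound : ∀ f : ↥U →₀ ℂ, ‖Ψ f‖ ≤ ‖Φ f‖ := by
    intro f
    set s := f.support with hs
    set n := s.card with hn
    set e : Fin n ≃ {x // x ∈ s} := s.equivFin.symm with he
    set z : Fin n → ℂ := fun i => ((e i : ↥U) : ℂ) with hz
    have hzU : ∀ i, z i ∈ U := fun i => (e i : ↥U).2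
    have hzd : ∀ i, ‖σ (z i)‖ < 1 := fun i => hd _ (hzU i)
    set a : Fin n → ℂ := fun i => f (e i) with hb
    have hsum : ∀ g : ↥U → H2, (∑ u ∈ s, g u) = ∑ i, g (e i) := by
      intro g
      rw [← Finset.sum_attach s g, ← Finset.univ_eq_attach]
      exact (Equiv.sum_comp e fun x => g ↑x).symm
    have hΦf : Φ f = ∑ i, a i • kk (σ (z i)) (hzd i) := by
      rw [hΦ, Finsupp.linearCombination_apply, Finsupp.sum, hsum fun u => f u • v u]
    have hΨf : Ψ f = ∑ i, (a i * (starRingEnd ℂ) (S (z i))) • kk (σ (z i)) (hzd i) := by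
      rw [hΨ, Finsupp.linearCombination_apply, Finsupp.sum, hsum fun u => f u • w u]
      refine Finset.sum_congr rfl fun i _ => ?_
      rw [hw, smul_smul]
    rw [hΦf, hΨf]
    exact norm_ineq σ S U hUsub hσmap hpos n z hzU hzd a
  have hker : LinearMap.ker Φ ≤ LinearMap.ker Ψ := by
    intro f hf
    rw [LinearMap.mem_ker] at hf ⊢
    have := bound f
    rw [hf, norm_zero] at this
    exact norm_le_zero_iff.mp this
  set T1 : ((↥U →₀ ℂ) ⧸ LinearMap.ker Φ) →ₗ[ℂ] H2 := (LinearMap.ker Φ).liftQ Ψ hker with hT1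
  set M := LinearMap.range Φ with hM
  set T0 : M →ₗ[ℂ] H2 :=
    T1.comp (Φ.quotKerEquivRange.symm : M →ₗ[ℂ] ((↥U →₀ ℂ) ⧸ LinearMap.ker Φ)) with hT0
  have hT0app : ∀ (g : ↥U →₀ ℂ) (hg : Φ g ∈ M), T0 ⟨Φ g, hg⟩ = Ψ g := by
    intro g hg
    have h1 : Φ.quotKerEquivRange (Submodule.Quotient.mk g) = (⟨Φ g, hg⟩ : M) :=
      Subtype.ext (by exact Φ.quotKerEquivRange_apply_mk g)
    have h2 : Φ.quotKerEquivRange.symm (⟨Φ g, hg⟩ : M) = Submodule.Quotient.mk g := by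
      rw [← h1, LinearEquiv.symm_apply_apply]
    rw [hT0, LinearMap.comp_apply]
    erw [h2]
    rw [hT1, Submodule.liftQ_apply]
  have hbound : ∀ x : M, ‖T0 x‖ ≤ 1 * ‖x‖ := by
    rintro ⟨x, hx⟩
    obtain ⟨g, rfl⟩ := hx
    rw [one_mul, hT0app g ⟨g, rfl⟩]
    exact bound g
  set Tc : M →L[ℂ] H2 := LinearMap.mkContinuous T0 1 hbound with hTc
  -- density of the span of the kernels
  have hmemM : ∀ u : ↥U, v u ∈ M := by
    intro u
    refine ⟨Finsupp.single u 1, ?_⟩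
    rw [hΦ, Finsupp.linearCombination_single, one_smul]
  have hdense : Dense (M : Set H2) := by
    rw [Submodule.dense_iff_topologicalClosure_eq_top,
      Submodule.topologicalClosure_eq_top_iff]
    rw [Submodule.eq_bot_iff]
    intro f hf
    rw [Submodule.mem_orthogonal] at hf
    have hcoeff : ∀ m : ℕ, ‖(f : ∀ _ : ℕ, ℂ) m‖ ≤ ‖f‖ :=
      fun m => lp.norm_apply_le_norm (by norm_num) f m
    have hvanish : ∀ ζ ∈ ball (0:ℂ) 1, (∑' m : ℕ, (f : ∀ _ : ℕ, ℂ) m * ζ ^ m) = 0 := by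
      apply vanish_of_vanish_on_image σ hσ hσmap U hUopen hUne hUsub hinj
      · exact psum_analytic hcoeff
      · intro u hu
        have h0 := hf (v ⟨u, hu⟩) (hmemM ⟨u, hu⟩)
        rw [hv] at h0
        rw [lp.inner_eq_tsum] at h0
        rw [← h0]
        refine tsum_congr fun m => ?_
        simp only [RCLike.inner_apply, kk_apply, map_pow, RingHomCompTriple.comp_apply,
          starRingEnd_self_apply, RingHom.id_apply]
    have hzero : ∀ m : ℕ, (f : ∀ _ : ℕ, ℂ) m = 0 := psum_coeff_eq_zero hcoeff hvanish
    apply lp.ext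
    funext m
    rw [hzero m, lp.coeFn_zero, Pi.zero_apply]
  have hdr : DenseRange (M.subtypeL) := by
    have : Set.range (M.subtypeL) = (M : Set H2) := Subtype.range_coe
    rw [DenseRange, this]
    exact hdense
  have hub : ∀ x : M, ‖x‖ ≤ ((1:ℝ≥0) : ℝ) * ‖M.subtypeL x‖ := by
    intro x
    rw [NNReal.coe_one, one_mul]
    rfl
  set X : H2 →L[ℂ] H2 := Tc.extend M.subtypeL with hX
  refine ⟨X, ?_, ?_⟩
  · calc ‖X‖ ≤ (1:ℝ≥0) * ‖Tc‖ := ContinuousLinearMap.opNorm_extend_le Tc hdr hub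
    _ ≤ 1 := by
        rw [NNReal.coe_one, one_mul]
        exact LinearMap.mkContinuous_norm_le T0 zero_le_one hbound
  · intro u hu
    have h1 : kk (σ u) (hd u hu) = M.subtypeL ⟨v ⟨u, hu⟩, hmemM ⟨u, hu⟩⟩ := rfl
    rw [h1, hX, ContinuousLinearMap.extend_eq _ hdr
        (ContinuousLinearMap.isUniformEmbedding_of_bound _ hub).isUniformInducing]
    have h2 : (⟨v ⟨u, hu⟩, hmemM ⟨u, hu⟩⟩ : M)
        = ⟨Φ (Finsupp.single ⟨u, hu⟩ 1), ⟨Finsupp.single ⟨u, hu⟩ 1, rfl⟩⟩ := by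
      refine Subtype.ext ?_
      show v ⟨u, hu⟩ = Φ (Finsupp.single ⟨u, hu⟩ 1)
      rw [hΦ, Finsupp.linearCombination_single, one_smul]
    have h3 : Tc (⟨v ⟨u, hu⟩, hmemM ⟨u, hu⟩⟩ : M) = Ψ (Finsupp.single ⟨u, hu⟩ 1) :=
      (congrArg Tc h2).trans (hT0app _ _)
    rw [h3, hΨ, Finsupp.linearCombination_single, one_smul, hw]
    rfl

end SchurAux
end SchurAux


/-- If `σ, S` are analytic on `𝔻` with `σ(𝔻) ⊆ 𝔻`, `σ` is injective on a nonempty open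
subset `U ⊆ 𝔻`, and the kernel `(1 - S(z) conj(S(w)))/(1 - σ(z) conj(σ(w)))` is positive
on `U`, then `S = 𝒮 ∘ σ` for some Schur function `𝒮`. -/
theorem exists_schur_factorization
    (σ S : ℂ → ℂ)
    (hσ : DifferentiableOn ℂ σ unitDisk) (hS : DifferentiableOn ℂ S unitDisk)
    (hσmap : ∀ z ∈ unitDisk, σ z ∈ unitDisk)
    (U : Set ℂ) (hUopen : IsOpen U) (hUne : U.Nonempty) (hUsub : U ⊆ unitDisk)
    (hinj : Set.InjOn σ U)
    (hpos : IsPosKernel U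
      (fun z w => (1 - S z * (starRingEnd ℂ) (S w)) / (1 - σ z * (starRingEnd ℂ) (σ w)))) :
    ∃ 𝒮 : ℂ → ℂ, IsSchur 𝒮 ∧ ∀ z ∈ unitDisk, S z = 𝒮 (σ z) := by
  classical
  have hσ' : DifferentiableOn ℂ σ (ball (0:ℂ) 1) := hσ
  have hσmap' : ∀ z ∈ ball (0:ℂ) 1, σ z ∈ ball (0:ℂ) 1 := hσmap
  have hUsub' : U ⊆ ball (0:ℂ) 1 := hUsub
  have hd : ∀ u : ℂ, u ∈ U → ‖σ u‖ < 1 :=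
    fun u hu => mem_ball_zero_iff.mp (hσmap' u (hUsub' hu))
  obtain ⟨X, hXnorm, hXk⟩ := SchurAux.exists_contraction σ S hσ' hσmap' U hUopen hUne
    hUsub' hinj hpos hd
  set δ : ℕ → H2 := fun n => lp.single 2 n (1:ℂ) with hδ
  have hδnorm : ∀ n, ‖δ n‖ = 1 := by
    intro n
    rw [hδ]
    have := lp.norm_single (E := fun _ : ℕ => ℂ) (p := 2) (by norm_num)
      n (1:ℂ)
    simpa using this
  set c : ℕ → ℕ → ℂ := fun m n => (starRingEnd ℂ) ((X (δ n) : ∀ _ : ℕ, ℂ) m) with hc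
  have hcb : ∀ m n, ‖c m n‖ ≤ 1 := by
    intro m n
    rw [hc]
    calc ‖(starRingEnd ℂ) ((X (δ n) : ∀ _ : ℕ, ℂ) m)‖ = ‖(X (δ n) : ∀ _ : ℕ, ℂ) m‖ :=
          RCLike.norm_conj _
    _ ≤ ‖X (δ n)‖ := lp.norm_apply_le_norm (by norm_num) (X (δ n)) m
    _ ≤ ‖X‖ * ‖δ n‖ := X.le_opNorm (δ n)
    _ ≤ 1 * 1 := by
        apply mul_le_mul hXnorm (le_of_eq (hδnorm n)) (norm_nonneg _) zero_le_one
    _ = 1 := one_mul 1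
  set P : ℕ → ℂ → ℂ := fun m ζ => ∑' n : ℕ, c m n * ζ ^ n with hP
  have hPanalytic : ∀ m, AnalyticOnNhd ℂ (P m) (ball (0:ℂ) 1) :=
    fun m => SchurAux.psum_analytic (hcb m)
  -- coordinates of `X k_ζ` are conjugates of the values `P m ζ`
  have hkey : ∀ (ζ : ℂ) (hζ : ‖ζ‖ < 1) (m : ℕ),
      ((X (SchurAux.kk ζ hζ)) : ∀ _ : ℕ, ℂ) m = (starRingEnd ℂ) (P m ζ) := by
    intro ζ hζ m
    have h1 := SchurAux.hasSum_kk ζ hζ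
    have h2 : HasSum (fun n : ℕ => (starRingEnd ℂ) ζ ^ n • X (δ n)) (X (SchurAux.kk ζ hζ)) := by
      have := h1.mapL X
      simpa [map_smul] using this
    have h3 : HasSum (fun n : ℕ => (starRingEnd ℂ) ζ ^ n * (X (δ n) : ∀ _ : ℕ, ℂ) m)
        (((X (SchurAux.kk ζ hζ)) : ∀ _ : ℕ, ℂ) m) := by
      have := h2.mapL (SchurAux.coordL m)
      simpa [SchurAux.coordL_apply, lp.coeFn_smul, Pi.smul_apply, smul_eq_mul] using this
    have h4 : HasSum (fun n : ℕ => c m n * ζ ^ n) (P m ζ) :=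
      (SchurAux.psum_summable_s1 (hcb m) hζ).hasSum
    have h5 : HasSum (fun n : ℕ => (starRingEnd ℂ) (c m n * ζ ^ n)) ((starRingEnd ℂ) (P m ζ)) :=
      h4.star
    have h6 : (fun n : ℕ => (starRingEnd ℂ) (c m n * ζ ^ n))
        = fun n : ℕ => (starRingEnd ℂ) ζ ^ n * (X (δ n) : ∀ _ : ℕ, ℂ) m := by
      funext n
      rw [map_mul, hc]
      simp only [RingHomCompTriple.comp_apply, starRingEnd_self_apply, map_pow,
        RingHom.id_apply]
      ring
    rw [h6] at h5
    exact h3.unique h5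
  -- values on `σ(U)`
  have honU : ∀ m : ℕ, ∀ u ∈ U, P m (σ u) = S u * (σ u) ^ m := by
    intro m u hu
    have h1 := hkey (σ u) (hd u hu) m
    rw [hXk u hu] at h1
    rw [lp.coeFn_smul] at h1
    simp only [Pi.smul_apply, SchurAux.kk_apply, smul_eq_mul] at h1
    have h3 := congrArg (starRingEnd ℂ) h1
    simpa only [map_mul, map_pow, Complex.conj_conj] using h3.symm
  -- identity theorem: `P m = P 0 * ζ^m` on the disk
  have hQ : ∀ m : ℕ, ∀ ζ ∈ ball (0:ℂ) 1, P m ζ = P 0 ζ * ζ ^ m := by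
    intro m
    have hzero := SchurAux.vanish_of_vanish_on_image σ hσ' hσmap' U hUopen hUne hUsub' hinj
      (fun ζ => P m ζ - P 0 ζ * ζ ^ m)
      ((hPanalytic m).sub ((hPanalytic 0).mul ((analyticOnNhd_id).pow m)))
      (fun u hu => by
        show P m (σ u) - P 0 (σ u) * (σ u) ^ m = 0
        rw [honU m u hu, honU 0 u hu, pow_zero, mul_one]
        ring)
    intro ζ hζ
    have h : P m ζ - P 0 ζ * ζ ^ m = 0 := hzero ζ hζ
    exact sub_eq_zero.mp h
  -- eigenvector property everywhere
  have heig : ∀ (ζ : ℂ) (hζ : ‖ζ‖ < 1),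
      X (SchurAux.kk ζ hζ) = (starRingEnd ℂ) (P 0 ζ) • SchurAux.kk ζ hζ := by
    intro ζ hζ
    apply lp.ext
    funext m
    rw [hkey ζ hζ m, lp.coeFn_smul, Pi.smul_apply, SchurAux.kk_apply, smul_eq_mul,
      hQ m ζ (mem_ball_zero_iff.mpr hζ), map_mul, map_pow]
  -- Schur bound
  have hbound : ∀ ζ ∈ ball (0:ℂ) 1, ‖P 0 ζ‖ ≤ 1 := by
    intro ζ hζ
    have hζ' : ‖ζ‖ < 1 := mem_ball_zero_iff.mp hζ
    have h1 : ‖X (SchurAux.kk ζ hζ')‖ = ‖P 0 ζ‖ * ‖SchurAux.kk ζ hζ'‖ := by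
      rw [heig ζ hζ', norm_smul, RCLike.norm_conj]
    have h2 : ‖X (SchurAux.kk ζ hζ')‖ ≤ 1 * ‖SchurAux.kk ζ hζ'‖ := by
      calc ‖X (SchurAux.kk ζ hζ')‖ ≤ ‖X‖ * ‖SchurAux.kk ζ hζ'‖ := X.le_opNorm _
      _ ≤ 1 * ‖SchurAux.kk ζ hζ'‖ := by
          apply mul_le_mul_of_nonneg_right hXnorm (norm_nonneg _)
    have h3 : 0 < ‖SchurAux.kk ζ hζ'‖ :=
      norm_pos_iff.mpr (SchurAux.kk_ne_zero ζ hζ')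
    rw [h1] at h2
    have := (mul_le_mul_iff_left₀ h3).mp h2
    exact this
  refine ⟨P 0, ⟨(hPanalytic 0).differentiableOn, hbound⟩, ?_⟩
  -- finally, `S = P 0 ∘ σ` on the disk, by the identity theorem
  have hSanalytic : AnalyticOnNhd ℂ S (ball (0:ℂ) 1) :=
    hS.analyticOnNhd isOpen_ball
  have hcomp : AnalyticOnNhd ℂ (fun z => P 0 (σ z)) (ball (0:ℂ) 1) :=
    (hPanalytic 0).comp (hσ'.analyticOnNhd isOpen_ball) hσmap'
  obtain ⟨z₀, hz₀⟩ := hUne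
  have hev : (fun z => S z - P 0 (σ z)) =ᶠ[nhds z₀] 0 := by
    filter_upwards [hUopen.mem_nhds hz₀] with u hu
    have := honU 0 u hu
    rw [pow_zero, mul_one] at this
    simp [this]
  have hzero := (hSanalytic.sub hcomp).eqOn_zero_of_preconnected_of_eventuallyEq_zero
    ((convex_ball (0:ℂ) 1).isPreconnected) (hUsub' hz₀) hev
  intro z hz
  have h : S z - P 0 (σ z) = 0 := hzero hz
  exact sub_eq_zero.mp h
end
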